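/- arXiv:2601.17778 — 4 statements merged into one kernel-verified Lean document; each statement's English description precedes it below -/
import Mathlib

section
/- Suppose p : [0,∞) → [0,∞) is measurable, bounded on compact sets, and satisfies s·p(s) → f as s → ∞ for some constant f > 0. Then (1/log N)·∫_0^∞ e^{-s/N}·p(s) ds → f as N → ∞. -/
open MeasureTheory
open Filter Set Real


lemma tauber_arith (f ε C A lA lN T0 T1 : ℝ) (hε : 0 < ε) (hεf : ε < f)
    (hC : 0 ≤ C) (hA0 : 0 < A) (hlA : 0 ≤ lA) (hlN : 1 ≤ lN)
    (h0l : 0 ≤ T0) (h0u : T0 ≤ C * A)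
    (h1l : (f - ε) * (lN - lA - 1) ≤ T1)
    (h1u : T1 ≤ (f + ε) * (lN - lA + 1)) :
    f - ε - (C * A + 2 * f * (1 + lA)) / lN ≤ 1 / lN * (T0 + T1) ∧
    1 / lN * (T0 + T1) ≤ f + ε + (C * A + 2 * f * (1 + lA)) / lN := by
  have hlN0 : (0:ℝ) < lN := lt_of_lt_of_le one_pos hlN
  have hCA : 0 ≤ C * A := mul_nonneg hC hA0.le
  constructor
  · have hsum : (f - ε) * lN - (C * A + 2 * f * (1 + lA)) ≤ T0 + T1 := by
      nlinarith [mul_nonneg (by linarith : (0:ℝ) ≤ f + ε) (by linarith : (0:ℝ) ≤ 1 + lA)]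
    have heq : f - ε - (C * A + 2 * f * (1 + lA)) / lN
        = ((f - ε) * lN - (C * A + 2 * f * (1 + lA))) / lN := by field_simp
    rw [heq, one_div, inv_mul_eq_div]
    gcongr
  · have hsum : T0 + T1 ≤ (f + ε) * lN + (C * A + 2 * f * (1 + lA)) := by
      nlinarith [mul_nonneg (by linarith : (0:ℝ) ≤ f + ε) hlA,
        mul_nonneg (by linarith : (0:ℝ) ≤ f - ε) hlA]
    have heq : f + ε + (C * A + 2 * f * (1 + lA)) / lN
        = ((f + ε) * lN + (C * A + 2 * f * (1 + lA))) / lN := by field_simp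
    rw [heq, one_div, inv_mul_eq_div]
    gcongr

lemma aux_bounds (p : ℝ → ℝ) (f : ℝ) (hf : 0 < f)
    (hmeas : Measurable p) (hpos : ∀ s, 0 ≤ p s)
    (hloc : ∀ K : ℝ, 0 < K → ∃ C : ℝ, ∀ s ∈ Set.Icc (0 : ℝ) K, p s ≤ C)
    (hlim : Filter.Tendsto (fun s : ℝ => s * p s) Filter.atTop (nhds f))
    (ε : ℝ) (hε : 0 < ε) (hεf : ε < f) :
    ∃ D : ℝ, ∀ᶠ N : ℝ in atTop,
      f - ε - D / Real.log N ≤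
        (1 / Real.log N) * ∫ s in Set.Ioi (0 : ℝ), Real.exp (-s / N) * p s ∧
      (1 / Real.log N) * ∫ s in Set.Ioi (0 : ℝ), Real.exp (-s / N) * p s ≤
        f + ε + D / Real.log N := by
  -- choose A
  obtain ⟨A₀, hA₀⟩ := Metric.tendsto_atTop.1 hlim ε hε
  set A : ℝ := max A₀ 1 with hA
  have hA1 : (1:ℝ) ≤ A := le_max_right _ _
  have hA0 : (0:ℝ) < A := lt_of_lt_of_le one_pos hA1
  have hlogA : 0 ≤ Real.log A := Real.log_nonneg hA1
  have hpA : ∀ s, A ≤ s → (f - ε) / s ≤ p s ∧ p s ≤ (f + ε) / s := by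
    intro s hs
    have hs1 : (1:ℝ) ≤ s := le_trans hA1 hs
    have hs0 : (0:ℝ) < s := lt_of_lt_of_le one_pos hs1
    have := hA₀ s (le_trans (le_max_left _ _) hs)
    rw [Real.dist_eq, abs_lt] at this
    constructor
    · rw [div_le_iff₀ hs0]; nlinarith [this.1]
    · rw [le_div_iff₀ hs0]; nlinarith [this.2]
  obtain ⟨C₀, hC₀⟩ := hloc A hA0
  set C : ℝ := max C₀ 0 with hC
  have hC0 : 0 ≤ C := le_max_right _ _
  have hCb : ∀ s ∈ Set.Icc (0:ℝ) A, p s ≤ C := fun s hs => le_trans (hC₀ s hs) (le_max_left _ _)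
  refine ⟨C * A + 2 * f * (1 + Real.log A), ?_⟩
  filter_upwards [eventually_ge_atTop (max A (Real.exp 1))] with N hN
  have hNA : A ≤ N := le_trans (le_max_left _ _) hN
  have hNe : Real.exp 1 ≤ N := le_trans (le_max_right _ _) hN
  have hN0 : (0:ℝ) < N := lt_of_lt_of_le (Real.exp_pos 1) hNe
  have hlogN : (1:ℝ) ≤ Real.log N := by
    rw [← Real.log_exp 1]; exact Real.log_le_log (Real.exp_pos 1) hNe
  have hlogN0 : (0:ℝ) < Real.log N := lt_of_lt_of_le one_pos hlogN
  set F : ℝ → ℝ := fun s => Real.exp (-s / N) * p s with hF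
  have hFpos : ∀ s, 0 ≤ F s := fun s => mul_nonneg (Real.exp_pos _).le (hpos s)
  have hFm : Measurable F := (((measurable_id.neg).div_const N).exp).mul hmeas
  -- global integrability
  have hint : IntegrableOn F (Set.Ioi 0) := by
    set M : ℝ := max C (f + ε) with hM
    refine Integrable.mono' ((exp_neg_integrableOn_Ioi 0 (by positivity : (0:ℝ) < 1/N)).const_mul M)
      hFm.aestronglyMeasurable ?_
    refine (ae_restrict_iff' measurableSet_Ioi).2 (Filter.Eventually.of_forall ?_)
    intro s hs
    have hs0 : (0:ℝ) < s := hs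
    rw [Real.norm_eq_abs, abs_of_nonneg (hFpos s)]
    have hps : p s ≤ M := by
      rcases le_total s A with h | h
      · exact le_trans (hCb s ⟨hs0.le, h⟩) (le_max_left _ _)
      · refine le_trans (hpA s h).2 (le_trans ?_ (le_max_right _ _))
        have hs1 : (1:ℝ) ≤ s := le_trans hA1 h
        rw [div_le_iff₀ (lt_of_lt_of_le one_pos hs1)]
        nlinarith
    have : F s ≤ Real.exp (-s/N) * M :=
      mul_le_mul_of_nonneg_left hps (Real.exp_pos _).le
    calc F s ≤ Real.exp (-s/N) * M := this
      _ = M * Real.exp (-(1/N) * s) := by ring_nf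
  -- split at A
  have hsplit : ∫ s in Set.Ioi (0:ℝ), F s
      = (∫ s in Set.Ioc 0 A, F s) + ∫ s in Set.Ioi A, F s := by
    rw [← setIntegral_union (Set.Ioc_disjoint_Ioi le_rfl) measurableSet_Ioi
      (hint.mono_set Set.Ioc_subset_Ioi_self) (hint.mono_set (Set.Ioi_subset_Ioi hA0.le)),
      Set.Ioc_union_Ioi_eq_Ioi hA0.le]
  -- T0 bounds
  have h0l : 0 ≤ ∫ s in Set.Ioc (0:ℝ) A, F s :=
    setIntegral_nonneg measurableSet_Ioc fun s _ => hFpos s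
  have h0u : (∫ s in Set.Ioc (0:ℝ) A, F s) ≤ C * A := by
    have : (∫ s in Set.Ioc (0:ℝ) A, F s) ≤ ∫ _ in Set.Ioc (0:ℝ) A, C := by
      refine setIntegral_mono_on (hint.mono_set Set.Ioc_subset_Ioi_self)
        (integrableOn_const measure_Ioc_lt_top.ne) measurableSet_Ioc ?_
      intro s hs
      have h1 : Real.exp (-s/N) ≤ 1 := by
        rw [Real.exp_le_one_iff]
        have : (0:ℝ) ≤ s/N := div_nonneg hs.1.le hN0.le
        rw [neg_div]; linarith
      calc F s ≤ 1 * p s := mul_le_mul_of_nonneg_right h1 (hpos s)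
        _ = p s := one_mul _
        _ ≤ C := hCb s ⟨hs.1.le, hs.2⟩
    rw [setIntegral_const, measureReal_def, Real.volume_Ioc, smul_eq_mul] at this
    rw [ENNReal.toReal_ofReal (by linarith)] at this
    linarith [this]
  -- T1 lower bound
  have hfε : (0:ℝ) < f - ε := by linarith
  have hxne : ∀ x : ℝ, x ∈ Set.uIcc A N → x ≠ 0 := by
    intro x hx
    rw [Set.uIcc_of_le hNA] at hx
    exact (lt_of_lt_of_le hA0 hx.1).ne'
  have h0notin : (0:ℝ) ∉ Set.uIcc A N := fun h => hxne 0 h rfl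
  have hone_div : IntervalIntegrable (fun x : ℝ => 1 / x) volume A N := by
    apply ContinuousOn.intervalIntegrable
    exact continuousOn_const.div continuousOn_id fun x hx => hxne x hx
  have hGval : (∫ s in Set.Ioc A N, (f - ε) * (1/s - 1/N))
      = (f - ε) * ((Real.log N - Real.log A) - (N - A) / N) := by
    rw [← intervalIntegral.integral_of_le hNA, intervalIntegral.integral_const_mul,
      intervalIntegral.integral_sub hone_div intervalIntegrable_const,
      integral_one_div h0notin, intervalIntegral.integral_const,
      Real.log_div hN0.ne' hA0.ne', smul_eq_mul]
    ring
  have hGint : IntegrableOn (fun s : ℝ => (f - ε) * (1/s - 1/N)) (Set.Ioc A N) := by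
    have h2 : IntervalIntegrable (fun s : ℝ => (f - ε) * (1/s - 1/N)) volume A N :=
      (hone_div.sub (intervalIntegrable_const (c := 1/N))).const_mul (f - ε)
    rw [intervalIntegrable_iff_integrableOn_Ioc_of_le hNA] at h2
    exact h2
  have h1l : (f - ε) * (Real.log N - Real.log A - 1) ≤ ∫ s in Set.Ioi A, F s := by
    have step1 : (∫ s in Set.Ioc A N, (f - ε) * (1/s - 1/N)) ≤ ∫ s in Set.Ioc A N, F s := by
      refine setIntegral_mono_on hGint
        (hint.mono_set (fun x hx => lt_trans hA0 hx.1)) measurableSet_Ioc ?_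
      intro s hs
      have hs0 : (0:ℝ) < s := lt_trans hA0 hs.1
      have he : 1 - s/N ≤ Real.exp (-s/N) := by
        have := Real.add_one_le_exp (-s/N)
        rw [neg_div] at this ⊢
        linarith
      have hp : (f - ε) / s ≤ p s := (hpA s hs.1.le).1
      have h1 : (0:ℝ) ≤ 1 - s/N := by
        rw [sub_nonneg, div_le_one hN0]; exact hs.2
      calc (f - ε) * (1/s - 1/N) = (1 - s/N) * ((f - ε)/s) := by field_simp
        _ ≤ Real.exp (-s/N) * ((f - ε)/s) :=
            mul_le_mul_of_nonneg_right he (div_nonneg hfε.le hs0.le)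
        _ ≤ Real.exp (-s/N) * p s := mul_le_mul_of_nonneg_left hp (Real.exp_pos _).le
    have step2 : (∫ s in Set.Ioc A N, F s) ≤ ∫ s in Set.Ioi A, F s := by
      refine setIntegral_mono_set (hint.mono_set (Set.Ioi_subset_Ioi hA0.le))
        (Filter.Eventually.of_forall fun s => hFpos s)
        (HasSubset.Subset.eventuallyLE Set.Ioc_subset_Ioi_self)
    have hNA' : (N - A)/N ≤ 1 := by
      rw [div_le_one hN0]; linarith
    have : (f - ε) * (Real.log N - Real.log A - 1)
        ≤ (f - ε) * ((Real.log N - Real.log A) - (N - A)/N) := by nlinarith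
    linarith [hGval ▸ step1, step2]
  -- exponential tail integral
  have hExpIntOn : IntegrableOn (fun s : ℝ => Real.exp (-s/N)) (Set.Ioi N) := by
    have h := exp_neg_integrableOn_Ioi N (show (0:ℝ) < 1/N by positivity)
    refine h.congr_fun (fun x _ => ?_) measurableSet_Ioi
    congr 1; ring
  have hExpInt : (∫ s in Set.Ioi N, Real.exp (-s/N)) = N * Real.exp (-1) := by
    have hderiv : ∀ x ∈ Set.Ioi N, HasDerivAt (fun s => -N * Real.exp (-s/N))
        (Real.exp (-x/N)) x := by
      intro x _
      have h : HasDerivAt (fun s : ℝ => -s/N) (-1/N) x := by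
        simpa using ((hasDerivAt_id x).neg.div_const N)
      have h2 := (h.exp).const_mul (-N)
      refine h2.congr_deriv ?_
      field_simp
    have htend : Filter.Tendsto (fun s : ℝ => -N * Real.exp (-s/N)) Filter.atTop (nhds 0) := by
      have h1 : Filter.Tendsto (fun s : ℝ => -s/N) Filter.atTop Filter.atBot := by
        have h0 : Filter.Tendsto (fun s : ℝ => s/N) Filter.atTop Filter.atTop :=
          Filter.tendsto_id.atTop_div_const hN0
        have := Filter.tendsto_neg_atBot_iff.mpr h0
        simpa [neg_div] using this
      have h2 := (Real.tendsto_exp_atBot.comp h1)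
      have h3 := h2.const_mul (-N)
      simpa using h3
    have := integral_Ioi_of_hasDerivAt_of_tendsto
      ((continuous_const.mul (((continuous_id.neg).div_const N).rexp)).continuousWithinAt)
      hderiv hExpIntOn htend
    rw [this]
    simp only [Pi.mul_apply, Pi.neg_apply, id_eq]
    rw [show -N/N = (-1:ℝ) by field_simp]
    ring
  -- T1 upper bound
  have hsplit2 : (∫ s in Set.Ioi A, F s)
      = (∫ s in Set.Ioc A N, F s) + ∫ s in Set.Ioi N, F s := by
    rw [← setIntegral_union (Set.Ioc_disjoint_Ioi le_rfl) measurableSet_Ioi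
      ((hint.mono_set (Set.Ioi_subset_Ioi hA0.le)).mono_set Set.Ioc_subset_Ioi_self)
      (hint.mono_set (Set.Ioi_subset_Ioi hN0.le)), Set.Ioc_union_Ioi_eq_Ioi hNA]
  have hmid : (∫ s in Set.Ioc A N, F s) ≤ (f + ε) * (Real.log N - Real.log A) := by
    have step : (∫ s in Set.Ioc A N, F s) ≤ ∫ s in Set.Ioc A N, (f + ε) * (1/s) := by
      refine setIntegral_mono_on (hint.mono_set (fun x hx => lt_trans hA0 hx.1)) ?_
        measurableSet_Ioc ?_
      · have h2 : IntervalIntegrable (fun s : ℝ => (f + ε) * (1/s)) volume A N :=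
          hone_div.const_mul (f + ε)
        rw [intervalIntegrable_iff_integrableOn_Ioc_of_le hNA] at h2
        exact h2
      · intro s hs
        have hs0 : (0:ℝ) < s := lt_trans hA0 hs.1
        have h1 : Real.exp (-s/N) ≤ 1 := by
          rw [Real.exp_le_one_iff, neg_div]
          have : (0:ℝ) ≤ s/N := div_nonneg hs0.le hN0.le
          linarith
        calc F s ≤ 1 * p s := mul_le_mul_of_nonneg_right h1 (hpos s)
          _ = p s := one_mul _
          _ ≤ (f + ε)/s := (hpA s hs.1.le).2
          _ = (f + ε) * (1/s) := by ring
    have hval : (∫ s in Set.Ioc A N, (f + ε) * (1/s))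
        = (f + ε) * (Real.log N - Real.log A) := by
      rw [← intervalIntegral.integral_of_le hNA, intervalIntegral.integral_const_mul,
        integral_one_div h0notin, Real.log_div hN0.ne' hA0.ne']
    linarith [hval ▸ step]
  have htail : (∫ s in Set.Ioi N, F s) ≤ f + ε := by
    have step : (∫ s in Set.Ioi N, F s) ≤ ∫ s in Set.Ioi N, ((f + ε)/N) * Real.exp (-s/N) := by
      refine setIntegral_mono_on (hint.mono_set (Set.Ioi_subset_Ioi hN0.le))
        (hExpIntOn.const_mul _) measurableSet_Ioi ?_
      intro s hs
      have hsN : N ≤ s := le_of_lt hs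
      have hs0 : (0:ℝ) < s := lt_of_lt_of_le hN0 hsN
      have hp : p s ≤ (f + ε)/N := by
        refine le_trans (hpA s (le_trans hNA hsN)).2 ?_
        exact div_le_div_of_nonneg_left (by linarith) hN0 hsN
      calc F s ≤ Real.exp (-s/N) * ((f + ε)/N) :=
            mul_le_mul_of_nonneg_left hp (Real.exp_pos _).le
        _ = ((f + ε)/N) * Real.exp (-s/N) := by ring
    rw [integral_const_mul, hExpInt] at step
    have he1 : Real.exp (-1) ≤ 1 := by
      rw [Real.exp_le_one_iff]; norm_num
    calc (∫ s in Set.Ioi N, F s) ≤ (f + ε)/N * (N * Real.exp (-1)) := step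
      _ = (f + ε) * Real.exp (-1) := by field_simp
      _ ≤ (f + ε) * 1 := mul_le_mul_of_nonneg_left he1 (by linarith)
      _ = f + ε := mul_one _
  have h1u : (∫ s in Set.Ioi A, F s) ≤ (f + ε) * (Real.log N - Real.log A + 1) := by
    rw [hsplit2]; nlinarith [hmid, htail]
  -- combine
  rw [hsplit]
  exact tauber_arith f ε C A (Real.log A) (Real.log N)
    (∫ s in Set.Ioc (0:ℝ) A, F s) (∫ s in Set.Ioi A, F s)
    hε hεf hC0 hA0 hlogA hlogN h0l h0u h1l h1u


/-- if `p ≥ 0` is measurable, bounded on compact sets and `s·p s → f > 0`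
as `s → ∞`, then `(1/log N)·∫_0^∞ e^{-s/N}·p s ds → f` as `N → ∞`. -/
theorem statement6 (p : ℝ → ℝ) (f : ℝ) (hf : 0 < f)
    (hmeas : Measurable p) (hpos : ∀ s, 0 ≤ p s)
    (hloc : ∀ K : ℝ, 0 < K → ∃ C : ℝ, ∀ s ∈ Set.Icc (0 : ℝ) K, p s ≤ C)
    (hlim : Filter.Tendsto (fun s : ℝ => s * p s) Filter.atTop (nhds f)) :
    Filter.Tendsto
      (fun N : ℝ => (1 / Real.log N) * ∫ s in Set.Ioi (0 : ℝ), Real.exp (-s / N) * p s)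
      Filter.atTop (nhds f) := by
  have hlogtend : ∀ D : ℝ, Filter.Tendsto (fun N : ℝ => D / Real.log N)
      Filter.atTop (nhds 0) := by
    intro D
    have h1 := Real.tendsto_log_atTop.inv_tendsto_atTop
    have h2 := h1.const_mul D
    simpa [div_eq_mul_inv] using h2
  rw [tendsto_order]
  constructor
  · intro a ha
    set ε : ℝ := min ((f - a)/2) (f/2) with hε'
    have hε : 0 < ε := lt_min (by linarith) (by linarith)
    have hεf : ε < f := lt_of_le_of_lt (min_le_right _ _) (by linarith)
    obtain ⟨D, hD⟩ := aux_bounds p f hf hmeas hpos hloc hlim ε hε hεf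
    have h0 : Filter.Tendsto (fun N : ℝ => f - ε - D / Real.log N)
        Filter.atTop (nhds (f - ε)) := by
      have h := (tendsto_const_nhds (x := f - ε)).sub (hlogtend D)
      simpa using h
    have ha' : a < f - ε := by
      have h1 : ε ≤ (f - a)/2 := min_le_left _ _
      linarith
    filter_upwards [hD, h0.eventually (eventually_gt_nhds ha')] with N h1 h2
    exact lt_of_lt_of_le h2 h1.1
  · intro b hb
    set ε : ℝ := min ((b - f)/2) (f/2) with hε'
    have hε : 0 < ε := lt_min (by linarith) (by linarith)
    have hεf : ε < f := lt_of_le_of_lt (min_le_right _ _) (by linarith)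
    obtain ⟨D, hD⟩ := aux_bounds p f hf hmeas hpos hloc hlim ε hε hεf
    have h0 : Filter.Tendsto (fun N : ℝ => f + ε + D / Real.log N)
        Filter.atTop (nhds (f + ε)) := by
      have h := (tendsto_const_nhds (x := f + ε)).add (hlogtend D)
      simpa using h
    have hb' : f + ε < b := by
      have h1 : ε ≤ (b - f)/2 := min_le_left _ _
      linarith
    filter_upwards [hD, h0.eventually (eventually_lt_nhds hb')] with N h1 h2
    exact lt_of_le_of_lt h1.2 h2
end

section
/- Suppose p : [0,∞) → [0,∞) is measurable, bounded on compact sets, and s·(log s)·p(s) → f as s → ∞ for some constant f > 0. Then (1/log(log N))·∫_0^∞ e^{-s/N}·p(s) ds → f as N → ∞. -/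
open MeasureTheory Set Real Filter

lemma expIntOn {N : ℝ} (hN : 0 < N) (a : ℝ) :
    IntegrableOn (fun s => Real.exp (-s / N)) (Ioi a) := by
  have : IntegrableOn (fun s => Real.exp (-(1/N) * s)) (Ioi a) :=
    exp_neg_integrableOn_Ioi a (by positivity)
  refine this.congr_fun (fun s _ => by ring_nf) measurableSet_Ioi

lemma expTail {N : ℝ} (hN : 0 < N) (a : ℝ) :
    ∫ s in Ioi a, Real.exp (-s / N) = N * Real.exp (-a / N) := by
  have hderiv : ∀ x ∈ Ici a, HasDerivAt (fun s => -N * Real.exp (-s / N))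
      (Real.exp (-x / N)) x := by
    intro x _
    have h1 : HasDerivAt (fun s : ℝ => -s / N) (-1 / N) x := by
      simpa using ((hasDerivAt_id x).neg.div_const N)
    have h2 := (Real.hasDerivAt_exp (-x / N)).comp x h1
    have h3 := h2.const_mul (-N)
    refine h3.congr_deriv ?_
    rw [show -N * (Real.exp (-x / N) * (-1 / N)) = Real.exp (-x / N) * (N / N) by ring,
      div_self hN.ne', mul_one]
  have ht : Tendsto (fun s => -N * Real.exp (-s / N)) atTop (nhds 0) := by
    have : Tendsto (fun s : ℝ => -s / N) atTop atBot := by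
      apply Tendsto.atBot_div_const hN
      exact tendsto_neg_atBot_iff.mpr tendsto_id
    have := (Real.tendsto_exp_atBot.comp this).const_mul (-N)
    simpa using this
  have := integral_Ioi_of_hasDerivAt_of_tendsto' hderiv (expIntOn hN a) ht
  rw [this]; ring

lemma invslog_contOn {a b : ℝ} (ha : Real.exp 1 ≤ a) :
    ContinuousOn (fun s : ℝ => (s * Real.log s)⁻¹) (Icc a b) := by
  have hco : ∀ x ∈ Icc a b, (0:ℝ) < x ∧ 1 ≤ Real.log x := by
    intro x hx
    have hx1 : Real.exp 1 ≤ x := le_trans ha hx.1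
    have hx0 : 0 < x := lt_of_lt_of_le (Real.exp_pos 1) hx1
    exact ⟨hx0, by simpa using Real.log_le_log (Real.exp_pos 1) hx1⟩
  apply ContinuousOn.inv₀
  · exact (continuousOn_id.mul (Real.continuousOn_log.mono
      (fun x hx => ne_of_gt ((hco x hx).1))))
  · intro x hx
    obtain ⟨hx0, hlx⟩ := hco x hx
    positivity

lemma invslog_intOn {a b : ℝ} (ha : Real.exp 1 ≤ a) :
    IntegrableOn (fun s : ℝ => (s * Real.log s)⁻¹) (Ioc a b) :=
  ((invslog_contOn ha).integrableOn_Icc).mono_set Ioc_subset_Icc_self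

lemma loglogFTC {a b : ℝ} (ha : Real.exp 1 ≤ a) (hab : a ≤ b) :
    ∫ s in Ioc a b, (s * Real.log s)⁻¹ =
      Real.log (Real.log b) - Real.log (Real.log a) := by
  have hco : ∀ x ∈ Icc a b, (0:ℝ) < x ∧ 1 ≤ Real.log x := by
    intro x hx
    have hx1 : Real.exp 1 ≤ x := le_trans ha hx.1
    have hx0 : 0 < x := lt_of_lt_of_le (Real.exp_pos 1) hx1
    exact ⟨hx0, by simpa using Real.log_le_log (Real.exp_pos 1) hx1⟩
  rw [← intervalIntegral.integral_of_le hab]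
  have hFTC := intervalIntegral.integral_eq_sub_of_hasDerivAt
    (f := fun s => Real.log (Real.log s)) (f' := fun s => (s * Real.log s)⁻¹)
    (a := a) (b := b) ?_ ?_
  · exact hFTC
  · intro x hx
    rw [uIcc_of_le hab] at hx
    obtain ⟨hx0, hlx⟩ := hco x hx
    have hlx0 : Real.log x ≠ 0 := by linarith
    have h1 : HasDerivAt Real.log x⁻¹ x := Real.hasDerivAt_log (ne_of_gt hx0)
    have h2 : HasDerivAt Real.log (Real.log x)⁻¹ (Real.log x) :=
      Real.hasDerivAt_log hlx0
    have := h2.comp x h1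
    refine this.congr_deriv ?_
    ring
  · apply ContinuousOn.intervalIntegrable
    rw [uIcc_of_le hab]
    exact invslog_contOn ha

set_option maxHeartbeats 2000000 in
/-- if `p ≥ 0` is measurable, bounded on compact sets and
`s·(log s)·p s → f > 0` as `s → ∞`, then
`(1/log(log N))·∫_0^∞ e^{-s/N}·p s ds → f` as `N → ∞`. -/
theorem statement7 (p : ℝ → ℝ) (f : ℝ) (hf : 0 < f)
    (hmeas : Measurable p) (hpos : ∀ s, 0 ≤ p s)
    (hloc : ∀ K : ℝ, 0 < K → ∃ C : ℝ, ∀ s ∈ Set.Icc (0 : ℝ) K, p s ≤ C)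
    (hlim : Filter.Tendsto (fun s : ℝ => s * Real.log s * p s) Filter.atTop (nhds f)) :
    Filter.Tendsto
      (fun N : ℝ =>
        (1 / Real.log (Real.log N)) * ∫ s in Set.Ioi (0 : ℝ), Real.exp (-s / N) * p s)
      Filter.atTop (nhds f) := by
  rw [Metric.tendsto_nhds]
  intro ε hε
  set ε₁ : ℝ := min ε f / 2 with hε₁def
  have hε₁ : 0 < ε₁ := by
    have : 0 < min ε f := lt_min hε hf
    positivity
  have hε₁ε : ε₁ < ε := by
    have h1 : min ε f ≤ ε := min_le_left _ _
    simp only [hε₁def]; linarith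
  have hfε₁ : 0 < f - ε₁ := by
    have h1 : min ε f ≤ f := min_le_right _ _
    simp only [hε₁def]; linarith
  -- threshold S₀
  obtain ⟨S₁, hS₁⟩ := Filter.eventually_atTop.mp ((Metric.tendsto_nhds.mp hlim) ε₁ hε₁)
  set S₀ : ℝ := max S₁ (Real.exp 1) with hS₀def
  have hS₀e : Real.exp 1 ≤ S₀ := le_max_right _ _
  have hS₀pos : 0 < S₀ := lt_of_lt_of_le (Real.exp_pos 1) hS₀e
  have hlogS₀ : 1 ≤ Real.log S₀ := by
    simpa using Real.log_le_log (Real.exp_pos 1) hS₀e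
  have hllS₀ : 0 ≤ Real.log (Real.log S₀) :=
    Real.log_nonneg hlogS₀
  -- pointwise bounds above S₀
  have hq : ∀ s : ℝ, S₀ ≤ s → 1 ≤ s * Real.log s := by
    intro s hs
    have h1 : Real.exp 1 ≤ s := le_trans hS₀e hs
    have h0 : 0 < s := lt_of_lt_of_le (Real.exp_pos 1) h1
    have h2 : 1 ≤ Real.log s := by simpa using Real.log_le_log (Real.exp_pos 1) h1
    nlinarith [Real.add_one_le_exp 1, Real.exp_pos 1]
  have hkey : ∀ s : ℝ, S₀ ≤ s →
      (f - ε₁) * (s * Real.log s)⁻¹ ≤ p s ∧ p s ≤ (f + ε₁) * (s * Real.log s)⁻¹ := by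
    intro s hs
    have hq1 := hq s hs
    have hqpos : 0 < s * Real.log s := by linarith
    have h := hS₁ s (le_trans (le_max_left _ _) hs)
    rw [Real.dist_eq, abs_lt] at h
    constructor
    · rw [mul_inv_le_iff₀ hqpos]
      nlinarith [h.1]
    · rw [le_mul_inv_iff₀ hqpos]
      nlinarith [h.2]
  -- a global bound for p
  obtain ⟨C, hC⟩ := hloc S₀ hS₀pos
  set M : ℝ := max C (f + ε₁) with hMdef
  have hM : ∀ s : ℝ, 0 ≤ s → p s ≤ M := by
    intro s hs
    rcases le_or_gt s S₀ with h | h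
    · exact le_trans (hC s ⟨hs, h⟩) (le_max_left _ _)
    · have hk := (hkey s h.le).2
      have hq1 := hq s h.le
      have : (f + ε₁) * (s * Real.log s)⁻¹ ≤ f + ε₁ := by
        have h2 : (s * Real.log s)⁻¹ ≤ 1 := by
          rw [inv_le_one_iff₀]; right; exact hq1
        nlinarith
      exact le_trans hk (le_trans this (le_max_right _ _))
  have hM0 : 0 ≤ M := le_trans (hpos 0) (hM 0 le_rfl)
  -- integrability of the main integrand
  have hInt : ∀ N : ℝ, 0 < N →
      IntegrableOn (fun s => Real.exp (-s / N) * p s) (Ioi (0:ℝ)) := by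
    intro N hN
    apply Integrable.mono' ((expIntOn hN 0).const_mul M)
    · exact ((Real.measurable_exp.comp (measurable_id.neg.div_const N)).mul
        hmeas).aestronglyMeasurable
    · filter_upwards [ae_restrict_mem measurableSet_Ioi] with s hs
      have hs0 : (0:ℝ) ≤ s := (le_of_lt hs)
      rw [Real.norm_eq_abs, abs_of_nonneg (mul_nonneg (Real.exp_pos _).le (hpos s))]
      calc Real.exp (-s / N) * p s ≤ Real.exp (-s / N) * M :=
            mul_le_mul_of_nonneg_left (hM s hs0) (Real.exp_pos _).le
        _ = M * Real.exp (-s / N) := by ring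
  -- the constant in the lower bound
  set c : ℝ := Real.log (Real.log S₀) + Real.log 2 with hcdef
  -- limit facts
  have hLtop : Tendsto (fun N : ℝ => Real.log (Real.log N)) atTop atTop :=
    Real.tendsto_log_atTop.comp Real.tendsto_log_atTop
  have hsqrtTop : Tendsto (fun N : ℝ => Real.sqrt N) atTop atTop := by
    have h := tendsto_rpow_atTop (y := (1/2 : ℝ)) (by norm_num)
    apply h.congr'
    filter_upwards [eventually_ge_atTop (0:ℝ)] with x hx
    rw [Real.sqrt_eq_rpow]
  have hexp1 : Tendsto (fun N : ℝ => Real.exp (-(1 / Real.sqrt N))) atTop (nhds 1) := by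
    have h0 : Tendsto (fun N : ℝ => 1 / Real.sqrt N) atTop (nhds 0) :=
      tendsto_const_nhds.div_atTop hsqrtTop
    have h0' : Tendsto (fun N : ℝ => -(1 / Real.sqrt N)) atTop (nhds 0) := by
      simpa using h0.neg
    have := (Real.continuous_exp.tendsto 0).comp h0'
    simpa [Function.comp_def] using this
  have hc0 : Tendsto (fun N : ℝ => c / Real.log (Real.log N)) atTop (nhds 0) :=
    tendsto_const_nhds.div_atTop hLtop
  have hφ : Tendsto (fun N : ℝ => Real.exp (-(1 / Real.sqrt N)) *
      ((f - ε₁) * (1 - c / Real.log (Real.log N)))) atTop (nhds (f - ε₁)) := by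
    have := hexp1.mul (Tendsto.mul (tendsto_const_nhds (x := f - ε₁))
      ((tendsto_const_nhds (x := (1:ℝ))).sub hc0))
    simpa using this
  have hψ : Tendsto (fun N : ℝ => (f + ε₁) +
      (M * S₀ + (f + ε₁)) / Real.log (Real.log N)) atTop (nhds (f + ε₁)) := by
    have := (tendsto_const_nhds (x := f + ε₁)).add
      (tendsto_const_nhds.div_atTop hLtop (a := M * S₀ + (f + ε₁)))
    simpa using this
  have hφev : ∀ᶠ N : ℝ in atTop, f - ε < Real.exp (-(1 / Real.sqrt N)) *
      ((f - ε₁) * (1 - c / Real.log (Real.log N))) :=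
    hφ.eventually (eventually_gt_nhds (by linarith))
  have hψev : ∀ᶠ N : ℝ in atTop, (f + ε₁) +
      (M * S₀ + (f + ε₁)) / Real.log (Real.log N) < f + ε :=
    hψ.eventually (eventually_lt_nhds (by linarith))
  filter_upwards [hφev, hψev, eventually_ge_atTop (S₀^2), eventually_ge_atTop (Real.exp 2),
    eventually_ge_atTop (S₀ + 1)] with N hφN hψN hNS₀sq hNe2 hNS₀
  -- basic facts about N
  have hNpos : 0 < N := lt_of_lt_of_le (Real.exp_pos 2) hNe2
  have hlogN : 2 ≤ Real.log N := by
    simpa using Real.log_le_log (Real.exp_pos 2) hNe2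
  have hlogNpos : 0 < Real.log N := by linarith
  have hL : Real.log (Real.log 2) ≤ Real.log (Real.log N) := by
    apply Real.log_le_log
    · exact Real.log_pos (by norm_num)
    · apply Real.log_le_log (by norm_num)
      calc (2:ℝ) ≤ Real.exp 2 := by nlinarith [Real.add_one_le_exp 2]
        _ ≤ N := hNe2
  have hLpos : 0 < Real.log (Real.log N) := by
    have : (0:ℝ) < Real.log 2 := Real.log_pos (by norm_num)
    exact Real.log_pos (by linarith)
  set L : ℝ := Real.log (Real.log N) with hLdef
  have hS₀N : S₀ ≤ N := by linarith
  have hrN : S₀ ≤ Real.sqrt N := by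
    rw [Real.le_sqrt hS₀pos.le hNpos.le]; exact hNS₀sq
  have hsqrtpos : 0 < Real.sqrt N := lt_of_lt_of_le hS₀pos hrN
  have hsqN : Real.sqrt N ≤ N := by
    nlinarith [Real.sq_sqrt hNpos.le, Real.sqrt_nonneg N]
  -- log log sqrt N
  have hlogsqrt : Real.log (Real.sqrt N) = Real.log N / 2 := Real.log_sqrt hNpos.le
  have hloglogsqrt : Real.log (Real.log (Real.sqrt N)) = L - Real.log 2 := by
    rw [hlogsqrt, Real.log_div (by linarith) (by norm_num)]
  ------------------------------------------------------------------
  -- LOWER BOUND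
  ------------------------------------------------------------------
  have hlow : Real.exp (-(1 / Real.sqrt N)) * ((f - ε₁) * (L - c)) ≤
      ∫ s in Set.Ioi (0:ℝ), Real.exp (-s / N) * p s := by
    have hsub : Ioc S₀ (Real.sqrt N) ⊆ Ioi (0:ℝ) := fun x hx => lt_of_lt_of_le hS₀pos hx.1.le
    have step1 : ∫ s in Ioc S₀ (Real.sqrt N), Real.exp (-s / N) * p s ≤
        ∫ s in Set.Ioi (0:ℝ), Real.exp (-s / N) * p s := by
      apply setIntegral_mono_set (hInt N hNpos)
      · filter_upwards [] with s
        exact mul_nonneg (Real.exp_pos _).le (hpos s)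
      · exact HasSubset.Subset.eventuallyLE hsub
    have step2 : ∫ s in Ioc S₀ (Real.sqrt N),
        Real.exp (-(1 / Real.sqrt N)) * ((f - ε₁) * (s * Real.log s)⁻¹) ≤
        ∫ s in Ioc S₀ (Real.sqrt N), Real.exp (-s / N) * p s := by
      apply setIntegral_mono_on
      · exact (((invslog_intOn (b := Real.sqrt N) hS₀e).const_mul
          (f - ε₁)).const_mul (Real.exp (-(1 / Real.sqrt N))))
      · exact ((hInt N hNpos).mono_set hsub)
      · exact measurableSet_Ioc
      · intro s hs
        have hsS₀ : S₀ ≤ s := hs.1.le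
        have hq1 := hq s hsS₀
        have hqpos : (0:ℝ) < s * Real.log s := by linarith
        have hexp : Real.exp (-(1 / Real.sqrt N)) ≤ Real.exp (-s / N) := by
          apply Real.exp_le_exp.mpr
          rw [neg_div, neg_le_neg_iff, div_le_div_iff₀ hNpos hsqrtpos]
          calc s * Real.sqrt N ≤ Real.sqrt N * Real.sqrt N := by nlinarith [hs.2, hsqrtpos]
            _ = 1 * N := by rw [Real.mul_self_sqrt hNpos.le]; ring
        have hps := (hkey s hsS₀).1
        calc Real.exp (-(1 / Real.sqrt N)) * ((f - ε₁) * (s * Real.log s)⁻¹)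
            ≤ Real.exp (-s / N) * ((f - ε₁) * (s * Real.log s)⁻¹) := by
              apply mul_le_mul_of_nonneg_right hexp
              positivity
          _ ≤ Real.exp (-s / N) * p s := by
              apply mul_le_mul_of_nonneg_left _ (Real.exp_pos _).le
              exact le_trans hps le_rfl
    have hval : ∫ s in Ioc S₀ (Real.sqrt N),
        Real.exp (-(1 / Real.sqrt N)) * ((f - ε₁) * (s * Real.log s)⁻¹) =
        Real.exp (-(1 / Real.sqrt N)) * ((f - ε₁) * (L - c)) := by
      rw [integral_const_mul, integral_const_mul, loglogFTC hS₀e hrN, hloglogsqrt, hcdef]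
      ring_nf
    linarith [step1, step2, le_of_eq hval.symm]
  ------------------------------------------------------------------
  -- UPPER BOUND
  ------------------------------------------------------------------
  have hup : ∫ s in Set.Ioi (0:ℝ), Real.exp (-s / N) * p s ≤
      M * S₀ + (f + ε₁) * L + (f + ε₁) := by
    have hsplit1 : ∫ s in Set.Ioi (0:ℝ), Real.exp (-s / N) * p s =
        (∫ s in Ioc (0:ℝ) N, Real.exp (-s / N) * p s) +
        ∫ s in Ioi N, Real.exp (-s / N) * p s := by
      rw [← setIntegral_union Ioc_disjoint_Ioi_same measurableSet_Ioi
        ((hInt N hNpos).mono_set Ioc_subset_Ioi_self)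
        ((hInt N hNpos).mono_set (Ioi_subset_Ioi hNpos.le)),
        Ioc_union_Ioi_eq_Ioi hNpos.le]
    have hsplit2 : ∫ s in Ioc (0:ℝ) N, Real.exp (-s / N) * p s =
        (∫ s in Ioc (0:ℝ) S₀, Real.exp (-s / N) * p s) +
        ∫ s in Ioc S₀ N, Real.exp (-s / N) * p s := by
      rw [← setIntegral_union (Ioc_disjoint_Ioc_of_le le_rfl) measurableSet_Ioc
        ((hInt N hNpos).mono_set (fun x hx => hx.1))
        ((hInt N hNpos).mono_set (fun x hx => lt_of_lt_of_le hS₀pos hx.1.le)),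
        Ioc_union_Ioc_eq_Ioc hS₀pos.le hS₀N]
    have hT1 : ∫ s in Ioc (0:ℝ) S₀, Real.exp (-s / N) * p s ≤ M * S₀ := by
      have : ∫ s in Ioc (0:ℝ) S₀, Real.exp (-s / N) * p s ≤
          ∫ _ in Ioc (0:ℝ) S₀, M := by
        apply setIntegral_mono_on
        · exact (hInt N hNpos).mono_set (fun x hx => hx.1)
        · exact integrableOn_const (by
            rw [Real.volume_Ioc]; exact ENNReal.ofReal_ne_top)
        · exact measurableSet_Ioc
        · intro s hs
          have h1 : Real.exp (-s / N) ≤ 1 := by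
            apply Real.exp_le_one_iff.mpr
            have := hs.1
            rw [neg_div]
            simp only [neg_nonpos]
            positivity
          calc Real.exp (-s / N) * p s ≤ 1 * M :=
              mul_le_mul h1 (hM s hs.1.le) (hpos s) zero_le_one
            _ = M := one_mul M
      rw [setIntegral_const, Real.volume_real_Ioc_of_le hS₀pos.le, smul_eq_mul] at this
      linarith
    have hT2 : ∫ s in Ioc S₀ N, Real.exp (-s / N) * p s ≤ (f + ε₁) * L := by
      have h1 : ∫ s in Ioc S₀ N, Real.exp (-s / N) * p s ≤
          ∫ s in Ioc S₀ N, (f + ε₁) * (s * Real.log s)⁻¹ := by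
        apply setIntegral_mono_on
        · exact (hInt N hNpos).mono_set (fun x hx => lt_of_lt_of_le hS₀pos hx.1.le)
        · exact (invslog_intOn hS₀e).const_mul _
        · exact measurableSet_Ioc
        · intro s hs
          have hexp : Real.exp (-s / N) ≤ 1 := by
            apply Real.exp_le_one_iff.mpr
            have h0 : (0:ℝ) < s := lt_of_lt_of_le hS₀pos hs.1.le
            rw [neg_div]
            simp only [neg_nonpos]
            positivity
          calc Real.exp (-s / N) * p s ≤ 1 * p s :=
              mul_le_mul_of_nonneg_right hexp (hpos s)
            _ = p s := one_mul _
            _ ≤ (f + ε₁) * (s * Real.log s)⁻¹ := (hkey s hs.1.le).2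
      rw [integral_const_mul, loglogFTC hS₀e hS₀N] at h1
      have : (f + ε₁) * (L - Real.log (Real.log S₀)) ≤ (f + ε₁) * L := by
        apply mul_le_mul_of_nonneg_left _ (by linarith)
        linarith
      linarith
    have hT3 : ∫ s in Ioi N, Real.exp (-s / N) * p s ≤ f + ε₁ := by
      have h1 : ∫ s in Ioi N, Real.exp (-s / N) * p s ≤
          ∫ s in Ioi N, ((f + ε₁) / (N * Real.log N)) * Real.exp (-s / N) := by
        apply setIntegral_mono_on
        · exact (hInt N hNpos).mono_set (Ioi_subset_Ioi hNpos.le)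
        · exact (expIntOn hNpos N).const_mul _
        · exact measurableSet_Ioi
        · intro s hs
          have hsN : N ≤ s := (le_of_lt hs)
          have hsS₀ : S₀ ≤ s := le_trans hS₀N hsN
          have hq1 := hq s hsS₀
          have hqpos : (0:ℝ) < s * Real.log s := by linarith
          have hNN : (0:ℝ) < N * Real.log N := by positivity
          have hmono : N * Real.log N ≤ s * Real.log s := by
            have hls : Real.log N ≤ Real.log s := Real.log_le_log hNpos hsN
            nlinarith
          have hp2 : p s ≤ (f + ε₁) / (N * Real.log N) := by
            refine le_trans (hkey s hsS₀).2 ?_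
            rw [div_eq_mul_inv]
            apply mul_le_mul_of_nonneg_left _ (by linarith)
            exact inv_anti₀ hNN hmono
          calc Real.exp (-s / N) * p s ≤
              Real.exp (-s / N) * ((f + ε₁) / (N * Real.log N)) :=
                mul_le_mul_of_nonneg_left hp2 (Real.exp_pos _).le
            _ = ((f + ε₁) / (N * Real.log N)) * Real.exp (-s / N) := by ring
      rw [integral_const_mul, expTail hNpos N] at h1
      have hNN : (0:ℝ) < N * Real.log N := by positivity
      have hexp1 : Real.exp (-N / N) ≤ 1 := by
        apply Real.exp_le_one_iff.mpr
        rw [neg_div]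
        simp only [neg_nonpos]
        positivity
      have h2 : (f + ε₁) / (N * Real.log N) * (N * Real.exp (-N / N)) ≤ f + ε₁ := by
        rw [div_mul_eq_mul_div, div_le_iff₀ hNN]
        have e1 : N * Real.exp (-N / N) ≤ N * Real.log N := by nlinarith
        calc (f + ε₁) * (N * Real.exp (-N / N)) ≤ (f + ε₁) * (N * Real.log N) :=
            mul_le_mul_of_nonneg_left e1 (by linarith)
          _ = (f + ε₁) * (N * Real.log N) := rfl
      linarith
    -- combine
    have hT3' : 0 ≤ ∫ s in Ioi N, Real.exp (-s / N) * p s := by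
      apply setIntegral_nonneg measurableSet_Ioi
      intro s _
      exact mul_nonneg (Real.exp_pos _).le (hpos s)
    linarith [hsplit1, hsplit2, hT1, hT2, hT3]
  ------------------------------------------------------------------
  -- conclude
  ------------------------------------------------------------------
  rw [Real.dist_eq, abs_lt]
  have hLinv : (0:ℝ) < 1 / L := by positivity
  constructor
  · -- lower:  f - ε < (1/L) * ∫
    have h1 : (1 / L) * (Real.exp (-(1 / Real.sqrt N)) * ((f - ε₁) * (L - c))) ≤
        (1 / L) * ∫ s in Set.Ioi (0:ℝ), Real.exp (-s / N) * p s :=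
      mul_le_mul_of_nonneg_left hlow hLinv.le
    have h2 : (1 / L) * (Real.exp (-(1 / Real.sqrt N)) * ((f - ε₁) * (L - c))) =
        Real.exp (-(1 / Real.sqrt N)) * ((f - ε₁) * (1 - c / L)) := by
      field_simp
    rw [h2] at h1
    linarith [hφN]
  · -- upper
    have h1 : (1 / L) * ∫ s in Set.Ioi (0:ℝ), Real.exp (-s / N) * p s ≤
        (1 / L) * (M * S₀ + (f + ε₁) * L + (f + ε₁)) :=
      mul_le_mul_of_nonneg_left hup hLinv.le
    have h2 : (1 / L) * (M * S₀ + (f + ε₁) * L + (f + ε₁)) =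
        (f + ε₁) + (M * S₀ + (f + ε₁)) / L := by
      field_simp
      ring
    rw [h2] at h1
    linarith [hψN]
end

section
/- Let 1 < α < 2, f > 0, and let p : [0,∞) → [0,∞) be measurable, bounded on compact sets, with r^{1/α}·p(r) → f as r → ∞. Then for any a, b > 0, lim_{N→∞} N^{-(2−1/α)} ∫_0^{aN} ∫_0^{bN} p(s+θ) ds dθ = f·(α²/((α−1)(2α−1)))·((a+b)^{2−1/α} − a^{2−1/α} − b^{2−1/α}). -/
open Filter MeasureTheory Set intervalIntegral Real

private lemma aux_intInt {q : ℝ → ℝ} (hq : Measurable q)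
    (hb : ∀ K : ℝ, 0 < K → ∃ C, ∀ r ∈ Set.Icc (-K) K, |q r| ≤ C) :
    ∀ a b : ℝ, IntervalIntegrable q volume a b := by
  intro a b
  rw [intervalIntegrable_iff]
  have hK0 : (0:ℝ) < |a| + |b| + 1 := by positivity
  obtain ⟨C, hC⟩ := hb (|a| + |b| + 1) hK0
  apply Measure.integrableOn_of_bounded (M := C)
  · rw [uIoc]; exact measure_Ioc_lt_top.ne
  · exact hq.aestronglyMeasurable
  · filter_upwards [ae_restrict_mem measurableSet_uIoc] with x hx
    refine hC x ⟨?_, ?_⟩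
    · have h1 : -(|a| + |b| + 1) ≤ min a b := by
        have := neg_abs_le a; have := neg_abs_le b
        have := abs_nonneg a; have := abs_nonneg b
        rcases min_cases a b with ⟨h, _⟩ | ⟨h, _⟩ <;> rw [h] <;> linarith
      exact h1.trans hx.1.le
    · have h2 : max a b ≤ |a| + |b| + 1 := by
        have := le_abs_self a; have := le_abs_self b
        have := abs_nonneg a; have := abs_nonneg b
        rcases max_cases a b with ⟨h, _⟩ | ⟨h, _⟩ <;> rw [h] <;> linarith
      exact hx.2.trans h2

private lemma aux_karamata {g : ℝ → ℝ} {L β : ℝ} (hβ : β < 1)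
    (hint : ∀ a b : ℝ, IntervalIntegrable g volume a b)
    (hlim : Filter.Tendsto (fun r => r ^ β * g r) Filter.atTop (nhds L)) :
    Filter.Tendsto (fun T => T ^ (β - 1) * ∫ x in (0:ℝ)..T, g x) Filter.atTop
      (nhds (L / (1 - β))) := by
  have h1β : 0 < 1 - β := by linarith
  rw [Metric.tendsto_nhds]
  intro ε hε
  set ε' := ε * (1 - β) / 4 with hε'def
  have hε'pos : 0 < ε' := by positivity
  obtain ⟨R₀, hR₀⟩ := eventually_atTop.1 ((Metric.tendsto_nhds.1 hlim) ε' hε'pos)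
  set R := max R₀ 1 with hRdef
  have hR1 : (1:ℝ) ≤ R := le_max_right _ _
  have hR0 : (0:ℝ) < R := lt_of_lt_of_le one_pos hR1
  have hRbound : ∀ x, R ≤ x → |x ^ β * g x - L| < ε' := fun x hx => by
    have := hR₀ x (le_trans (le_max_left _ _) hx)
    rwa [Real.dist_eq] at this
  set C₀ := ∫ x in (0:ℝ)..R, g x with hC₀
  have tpow : Tendsto (fun T : ℝ => T ^ (β - 1)) atTop (nhds 0) := by
    have := tendsto_rpow_neg_atTop h1β
    simpa [neg_sub] using this
  have t1 : Tendsto (fun T : ℝ => T ^ (β - 1) * |C₀|) atTop (nhds 0) := by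
    simpa using tpow.mul_const |C₀|
  have t2 : Tendsto (fun T : ℝ => |L / (1 - β)| * (T ^ (β - 1) * R ^ (1 - β)))
      atTop (nhds 0) := by
    have := (tpow.mul_const (R ^ (1 - β))).const_mul |L / (1 - β)|
    simpa using this
  have e1 : ∀ᶠ T : ℝ in atTop, T ^ (β - 1) * |C₀| < ε / 4 :=
    t1.eventually_lt_const (by positivity)
  have e2 : ∀ᶠ T : ℝ in atTop, |L / (1 - β)| * (T ^ (β - 1) * R ^ (1 - β)) < ε / 4 :=
    t2.eventually_lt_const (by positivity)
  filter_upwards [e1, e2, eventually_ge_atTop R] with T h1 h2 h3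
  have hT0 : (0:ℝ) < T := lt_of_lt_of_le hR0 h3
  have hsplit : (∫ x in (0:ℝ)..T, g x) = C₀ + ∫ x in R..T, g x :=
    (integral_add_adjacent_intervals (hint 0 R) (hint R T)).symm
  set I := ∫ x in R..T, g x with hI
  set V := (T ^ (1 - β) - R ^ (1 - β)) / (1 - β) with hV
  have hTpow : T ^ (β - 1) * T ^ (1 - β) = 1 := by
    rw [← Real.rpow_add hT0]; norm_num
  have hrpow_int : IntervalIntegrable (fun x : ℝ => x ^ (-β)) volume R T :=
    intervalIntegrable_rpow' (by linarith)
  have hIexp : ∫ x in R..T, x ^ (-β) = V := by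
    rw [integral_rpow (Or.inl (by linarith : (-1:ℝ) < -β))]
    rw [show -β + 1 = 1 - β from by ring, hV]
  have hV0 : 0 ≤ V := by
    rw [hV]
    apply div_nonneg _ h1β.le
    have := Real.rpow_le_rpow hR0.le h3 h1β.le
    linarith
  have hsub : I - L * V = ∫ x in R..T, (g x - L * x ^ (-β)) := by
    rw [integral_sub (hint R T) (hrpow_int.const_mul L), intervalIntegral.integral_const_mul, hIexp]
  have claim1 : |I - L * V| ≤ ε' * V := by
    rw [hsub]
    have hbnd : ∀ᵐ t ∂(volume.restrict (Set.uIoc R T)),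
        ‖g t - L * t ^ (-β)‖ ≤ ε' * t ^ (-β) := by
      filter_upwards [ae_restrict_mem measurableSet_uIoc] with t ht
      rw [uIoc_of_le h3] at ht
      have ht0 : 0 < t := lt_of_lt_of_le hR0 ht.1.le
      have hbb := (hRbound t ht.1.le).le
      have hpow : t ^ (-β) * t ^ β = 1 := by rw [← Real.rpow_add ht0]; norm_num
      have heq : g t - L * t ^ (-β) = t ^ (-β) * (t ^ β * g t - L) := by
        linear_combination (-(g t)) * hpow
      rw [heq, Real.norm_eq_abs, abs_mul, abs_of_pos (Real.rpow_pos_of_pos ht0 _)]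
      calc t ^ (-β) * |t ^ β * g t - L| ≤ t ^ (-β) * ε' := by
            exact mul_le_mul_of_nonneg_left hbb (Real.rpow_pos_of_pos ht0 _).le
        _ = ε' * t ^ (-β) := mul_comm _ _
    have hnb := intervalIntegral.norm_integral_le_abs_of_norm_le hbnd (hrpow_int.const_mul ε')
    rw [Real.norm_eq_abs, intervalIntegral.integral_const_mul, hIexp,
      abs_of_nonneg (mul_nonneg hε'pos.le hV0)] at hnb
    exact hnb
  set u := T ^ (β - 1) * R ^ (1 - β) with hu
  have hu0 : 0 ≤ u := by
    rw [hu]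
    exact mul_nonneg (Real.rpow_pos_of_pos hT0 _).le (Real.rpow_pos_of_pos hR0 _).le
  have key : T ^ (β - 1) * (∫ x in (0:ℝ)..T, g x) - L / (1 - β)
      = T ^ (β - 1) * C₀ + T ^ (β - 1) * (I - L * V) - (L / (1 - β)) * u := by
    rw [hsplit, hV, hu]
    linear_combination (L / (1 - β)) * hTpow
  have hXV : T ^ (β - 1) * V = (1 - u) / (1 - β) := by
    rw [hV, hu]
    linear_combination (1 / (1 - β)) * hTpow
  rw [Real.dist_eq, key]
  have hX0 : (0:ℝ) ≤ T ^ (β - 1) := (Real.rpow_pos_of_pos hT0 _).le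
  have b1 : |T ^ (β - 1) * C₀| = T ^ (β - 1) * |C₀| := by
    rw [abs_mul, abs_of_nonneg hX0]
  have b2 : |T ^ (β - 1) * (I - L * V)| ≤ ε' * ((1 - u) / (1 - β)) := by
    rw [abs_mul, abs_of_nonneg hX0, ← hXV]
    calc T ^ (β - 1) * |I - L * V| ≤ T ^ (β - 1) * (ε' * V) :=
          mul_le_mul_of_nonneg_left claim1 hX0
      _ = ε' * (T ^ (β - 1) * V) := by ring
  have b2' : ε' * ((1 - u) / (1 - β)) ≤ ε / 4 := by
    have h : ε' * ((1 - u) / (1 - β)) = ε * (1 - u) / 4 := by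
      rw [hε'def]; field_simp
    rw [h]
    nlinarith [hε.le]
  have b3 : |(L / (1 - β)) * u| ≤ |L / (1 - β)| * (T ^ (β - 1) * R ^ (1 - β)) := by
    rw [abs_mul, abs_of_nonneg hu0, hu]
  calc |T ^ (β - 1) * C₀ + T ^ (β - 1) * (I - L * V) - (L / (1 - β)) * u|
      ≤ |T ^ (β - 1) * C₀| + |T ^ (β - 1) * (I - L * V)| + |(L / (1 - β)) * u| := by
        exact (abs_sub _ _).trans (by gcongr; exact abs_add_le _ _)
    _ < ε := by
        rw [b1]
        have := b2.trans b2'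
        linarith [b3.trans_lt h2]

/-- for `1 < α < 2`, `f > 0`, and `p ≥ 0` measurable, bounded on compact sets,
with `r^{1/α}·p r → f`, one has for all `a b > 0`:
`N^{-(2−1/α)} ∫_0^{aN} ∫_0^{bN} p (s+θ) ds dθ →
f·(α²/((α−1)(2α−1)))·((a+b)^{2−1/α} − a^{2−1/α} − b^{2−1/α})` as `N → ∞`. -/
theorem statement11 (α f : ℝ) (hα1 : 1 < α) (hα2 : α < 2) (hf : 0 < f)
    (p : ℝ → ℝ) (hmeas : Measurable p) (hpos : ∀ r, 0 ≤ p r)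
    (hloc : ∀ K : ℝ, 0 < K → ∃ C : ℝ, ∀ r ∈ Set.Icc (0 : ℝ) K, p r ≤ C)
    (hlim : Filter.Tendsto (fun r : ℝ => r ^ (1 / α) * p r) Filter.atTop (nhds f)) :
    ∀ a b : ℝ, 0 < a → 0 < b →
      Filter.Tendsto
        (fun N : ℝ => N ^ (-(2 - 1 / α)) *
          ∫ θ in (0 : ℝ)..(a * N), ∫ s in (0 : ℝ)..(b * N), p (s + θ))
        Filter.atTop
        (nhds (f * (α ^ 2 / ((α - 1) * (2 * α - 1))) *
          ((a + b) ^ (2 - 1 / α) - a ^ (2 - 1 / α) - b ^ (2 - 1 / α)))) := by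
  intro a b ha hb
  have hα0 : (0:ℝ) < α := by linarith
  set q : ℝ → ℝ := fun x => if 0 ≤ x then p x else 0 with hqdef
  have hq_meas : Measurable q := by
    exact Measurable.ite measurableSet_Ici hmeas measurable_const
  have hq_eq : ∀ x : ℝ, 0 ≤ x → q x = p x := fun x hx => if_pos hx
  have hqb : ∀ K : ℝ, 0 < K → ∃ C, ∀ r ∈ Set.Icc (-K) K, |q r| ≤ C := by
    intro K hK
    obtain ⟨C, hC⟩ := hloc K hK
    refine ⟨max C 0, fun r hr => ?_⟩
    by_cases h : 0 ≤ r
    · rw [hq_eq r h, abs_of_nonneg (hpos r)]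
      exact le_max_of_le_left (hC r ⟨h, hr.2⟩)
    · simp only [hqdef, if_neg h, abs_zero]
      exact le_max_right _ _
  have hqint : ∀ a b : ℝ, IntervalIntegrable q volume a b := aux_intInt hq_meas hqb
  have hqlim : Filter.Tendsto (fun r : ℝ => r ^ (1 / α) * q r) Filter.atTop (nhds f) := by
    apply hlim.congr'
    filter_upwards [eventually_ge_atTop (0:ℝ)] with r hr
    rw [hq_eq r hr]
  have hβ1 : 1 / α < 1 := by
    rw [div_lt_one hα0]; linarith
  -- first application: P
  set P : ℝ → ℝ := fun T => ∫ x in (0:ℝ)..T, q x with hPdef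
  have hP : Filter.Tendsto (fun T : ℝ => T ^ (1 / α - 1) * P T) Filter.atTop
      (nhds (f / (1 - 1 / α))) := aux_karamata hβ1 hqint hqlim
  have hPcont : Continuous P := intervalIntegral.continuous_primitive hqint 0
  have hPint : ∀ a b : ℝ, IntervalIntegrable P volume a b := fun a b =>
    hPcont.intervalIntegrable a b
  -- second application: Q
  set Q : ℝ → ℝ := fun T => ∫ x in (0:ℝ)..T, P x with hQdef
  have hQ : Filter.Tendsto (fun T : ℝ => T ^ (1 / α - 1 - 1) * Q T) Filter.atTop
      (nhds (f / (1 - 1 / α) / (1 - (1 / α - 1)))) :=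
    aux_karamata (by linarith) hPint hP
  rw [show 1 / α - 1 - 1 = -(2 - 1 / α) from by ring] at hQ
  set K0 : ℝ := f / (1 - 1 / α) / (1 - (1 / α - 1)) with hK0def
  have hK0 : K0 = f * (α ^ 2 / ((α - 1) * (2 * α - 1))) := by
    rw [hK0def,
      show (1 - 1 / α) = (α - 1) / α from by field_simp [hα0.ne'],
      show (1 - (1 / α - 1)) = (2 * α - 1) / α from by field_simp [hα0.ne']; ring,
      div_div, div_mul_div_comm, div_div_eq_mul_div]
    ring
  -- per-scale limit
  have hscale : ∀ c : ℝ, 0 < c →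
      Filter.Tendsto (fun N : ℝ => N ^ (-(2 - 1 / α)) * Q (c * N)) Filter.atTop
        (nhds (c ^ (2 - 1 / α) * K0)) := by
    intro c hc
    have hcomp : Filter.Tendsto (fun N : ℝ => (c * N) ^ (-(2 - 1 / α)) * Q (c * N))
        Filter.atTop (nhds K0) := hQ.comp (Filter.tendsto_id.const_mul_atTop hc)
    have := hcomp.const_mul (c ^ (2 - 1 / α))
    apply this.congr'
    filter_upwards [eventually_gt_atTop (0:ℝ)] with N hN
    have h1 : (c * N) ^ (-(2 - 1 / α)) = c ^ (-(2 - 1 / α)) * N ^ (-(2 - 1 / α)) :=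
      Real.mul_rpow hc.le hN.le
    have h2 : c ^ (2 - 1 / α) * c ^ (-(2 - 1 / α)) = 1 := by
      rw [← Real.rpow_add hc]; norm_num
    rw [h1]
    calc c ^ (2 - 1 / α) * (c ^ (-(2 - 1 / α)) * N ^ (-(2 - 1 / α)) * Q (c * N))
        = (c ^ (2 - 1 / α) * c ^ (-(2 - 1 / α))) * (N ^ (-(2 - 1 / α)) * Q (c * N)) := by
          ring
      _ = N ^ (-(2 - 1 / α)) * Q (c * N) := by rw [h2, one_mul]
  -- identity for the double integral
  have hident : ∀ N : ℝ, 0 < N →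
      (∫ θ in (0:ℝ)..(a * N), ∫ s in (0:ℝ)..(b * N), p (s + θ))
        = Q ((a + b) * N) - Q (a * N) - Q (b * N) := by
    intro N hN
    have haN : (0:ℝ) ≤ a * N := by positivity
    have hbN : (0:ℝ) ≤ b * N := by positivity
    have step1 : Set.EqOn (fun θ => ∫ s in (0:ℝ)..(b * N), p (s + θ))
        (fun θ => P (b * N + θ) - P θ) (Set.uIcc 0 (a * N)) := by
      intro θ hθ
      rw [Set.uIcc_of_le haN] at hθ
      have hθ0 : 0 ≤ θ := hθ.1
      have e1 : (∫ s in (0:ℝ)..(b * N), p (s + θ)) = ∫ s in (0:ℝ)..(b * N), q (s + θ) := by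
        apply intervalIntegral.integral_congr
        intro s hs
        rw [Set.uIcc_of_le hbN] at hs
        exact (hq_eq (s + θ) (by linarith [hs.1])).symm
      have e2 : (∫ s in (0:ℝ)..(b * N), q (s + θ)) = ∫ x in θ..(b * N + θ), q x := by
        have := intervalIntegral.integral_comp_add_right (a := (0:ℝ)) (b := b * N) q θ
        rwa [zero_add] at this
      have e3 : (∫ x in θ..(b * N + θ), q x) = P (b * N + θ) - P θ :=
        (intervalIntegral.integral_interval_sub_left (hqint 0 (b * N + θ))
          (hqint 0 θ)).symm
      simp only [e1, e2, e3]
    rw [intervalIntegral.integral_congr step1]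
    have hPshift : IntervalIntegrable (fun θ => P (b * N + θ)) volume 0 (a * N) :=
      (hPcont.comp (continuous_const.add continuous_id)).intervalIntegrable 0 (a * N)
    rw [intervalIntegral.integral_sub hPshift (hPint 0 (a * N))]
    have e4 : (∫ θ in (0:ℝ)..(a * N), P (b * N + θ)) = ∫ x in (b * N)..(a * N + b * N), P x := by
      have congr1 : (∫ θ in (0:ℝ)..(a * N), P (b * N + θ))
          = ∫ θ in (0:ℝ)..(a * N), P (θ + b * N) := by
        apply intervalIntegral.integral_congr
        intro θ _
        show P (b * N + θ) = P (θ + b * N)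
        rw [add_comm]
      rw [congr1]
      have := intervalIntegral.integral_comp_add_right (a := (0:ℝ)) (b := a * N) P (b * N)
      rwa [zero_add] at this
    rw [e4]
    have e5 : Q (a * N + b * N) - Q (b * N) = ∫ x in (b * N)..(a * N + b * N), P x :=
      intervalIntegral.integral_interval_sub_left (hPint 0 (a * N + b * N))
        (hPint 0 (b * N))
    rw [← e5, show (a + b) * N = a * N + b * N from by ring]
    ring
  -- conclude
  have hfinal := ((hscale (a + b) (by linarith)).sub (hscale a ha)).sub (hscale b hb)
  have hconst : (a + b) ^ (2 - 1 / α) * K0 - a ^ (2 - 1 / α) * K0 - b ^ (2 - 1 / α) * K0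
      = f * (α ^ 2 / ((α - 1) * (2 * α - 1))) *
        ((a + b) ^ (2 - 1 / α) - a ^ (2 - 1 / α) - b ^ (2 - 1 / α)) := by
    rw [hK0]; ring
  rw [hconst] at hfinal
  apply hfinal.congr'
  filter_upwards [eventually_gt_atTop (0:ℝ)] with N hN
  rw [hident N hN]
  ring
end

section
/- Let 1 < α < 2, β' > 0, f > 0, and t_i ≤ t_j. Then 2·f·∫_0^{t_i} ∫_0^{(t_i−s)β'} (θ^{−1/α} − (θ + (t_j−s)β')^{−1/α}) dθ ds = (α²/((α−1)(2α−1)))·f·(β')^{1−1/α}·(2t_i^{2−1/α} + 2t_j^{2−1/α} − (t_j−t_i)^{2−1/α} − (t_i+t_j)^{2−1/α}). -/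
open intervalIntegral MeasureTheory

lemma inner_int (r : ℝ) (hr : -1 < r) (hr0 : r + 1 ≠ 0) (A B : ℝ) :
    ∫ θ in (0:ℝ)..A, (θ ^ r - (θ + B) ^ r)
      = (A ^ (r+1) + B ^ (r+1) - (A + B) ^ (r+1)) / (r+1) := by
  have h1 : IntervalIntegrable (fun θ : ℝ => θ ^ r) volume 0 A :=
    intervalIntegral.intervalIntegrable_rpow' hr
  have h2 : IntervalIntegrable (fun θ : ℝ => (θ + B) ^ r) volume 0 A := by
    have := (intervalIntegral.intervalIntegrable_rpow' (a := B) (b := A + B) hr).comp_add_right B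
    simpa using this
  rw [intervalIntegral.integral_sub h1 h2,
    integral_rpow (Or.inl hr),
    intervalIntegral.integral_comp_add_right (fun x : ℝ => x ^ r) B,
    integral_rpow (Or.inl hr), Real.zero_rpow hr0]
  ring

/-- for `1 < α < 2`, `β' > 0`, `f > 0` and `0 ≤ tᵢ ≤ tⱼ`,
`2f·∫_0^{tᵢ} ∫_0^{(tᵢ−s)β'} (θ^{−1/α} − (θ+(tⱼ−s)β')^{−1/α}) dθ ds
= (α²/((α−1)(2α−1)))·f·β'^{1−1/α}·(2tᵢ^{2−1/α} + 2tⱼ^{2−1/α} − (tⱼ−tᵢ)^{2−1/α} − (tᵢ+tⱼ)^{2−1/α})`. -/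
theorem statement12 (α β' f ti tj : ℝ) (hα1 : 1 < α) (hα2 : α < 2)
    (hβ' : 0 < β') (hf : 0 < f) (hti : 0 ≤ ti) (htij : ti ≤ tj) :
    2 * f * ∫ s in (0 : ℝ)..ti, ∫ θ in (0 : ℝ)..((ti - s) * β'),
        (θ ^ (-(1 / α)) - (θ + (tj - s) * β') ^ (-(1 / α)))
      = (α ^ 2 / ((α - 1) * (2 * α - 1))) * f * β' ^ (1 - 1 / α) *
        (2 * ti ^ (2 - 1 / α) + 2 * tj ^ (2 - 1 / α)
          - (tj - ti) ^ (2 - 1 / α) - (ti + tj) ^ (2 - 1 / α)) := by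
  have hα0 : 0 < α := by linarith
  have h1α : 1 / α < 1 := by rw [div_lt_one hα0]; linarith
  have h1α0 : 0 < 1 / α := by positivity
  set p : ℝ := 1 - 1 / α with hp_def
  set q : ℝ := 2 - 1 / α with hq_def
  have hp : 0 < p := by simp only [hp_def]; linarith
  have hq : 0 < q := by simp only [hq_def]; linarith
  have hr : -1 < -(1 / α) := by linarith
  have hr1 : -(1 / α) + 1 = p := by simp only [hp_def]; ring
  have hp1 : p + 1 = q := by simp only [hp_def, hq_def]; ring
  have hcont : Continuous fun x : ℝ => x ^ p :=
    continuous_iff_continuousAt.2 fun x => Real.continuousAt_rpow_const x p (Or.inr hp.le)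
  -- rewrite the inner integral
  have key : Set.EqOn
      (fun s => ∫ θ in (0 : ℝ)..((ti - s) * β'),
        (θ ^ (-(1 / α)) - (θ + (tj - s) * β') ^ (-(1 / α))))
      (fun s => (β' ^ p / p) * ((ti - s) ^ p + (tj - s) ^ p - (ti + tj - 2 * s) ^ p))
      (Set.uIcc 0 ti) := by
    intro s hs
    rw [Set.uIcc_of_le hti] at hs
    have hs1 : 0 ≤ ti - s := by linarith [hs.2]
    have hs2 : 0 ≤ tj - s := by linarith [hs.2]
    have := inner_int (-(1/α)) hr (by rw [hr1]; exact hp.ne') ((ti - s) * β') ((tj - s) * β')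
    simp only [hr1] at this
    simp only []; rw [this]
    have e1 : (ti - s) * β' + (tj - s) * β' = (ti + tj - 2 * s) * β' := by ring
    rw [e1, Real.mul_rpow hs1 hβ'.le, Real.mul_rpow hs2 hβ'.le,
      Real.mul_rpow (by linarith) hβ'.le]
    ring
  rw [intervalIntegral.integral_congr key]
  have i1 : IntervalIntegrable (fun s : ℝ => (ti - s) ^ p) volume 0 ti :=
    (hcont.comp (by continuity)).intervalIntegrable 0 ti
  have i2 : IntervalIntegrable (fun s : ℝ => (tj - s) ^ p) volume 0 ti :=
    (hcont.comp (by continuity)).intervalIntegrable 0 ti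
  have i3 : IntervalIntegrable (fun s : ℝ => (ti + tj - 2 * s) ^ p) volume 0 ti :=
    (hcont.comp (by continuity)).intervalIntegrable 0 ti
  have split : (∫ s in (0 : ℝ)..ti,
      (β' ^ p / p) * ((ti - s) ^ p + (tj - s) ^ p - (ti + tj - 2 * s) ^ p))
      = (β' ^ p / p) * ((∫ s in (0 : ℝ)..ti, (ti - s) ^ p)
          + (∫ s in (0 : ℝ)..ti, (tj - s) ^ p)
          - (∫ s in (0 : ℝ)..ti, (ti + tj - 2 * s) ^ p)) := by
    rw [intervalIntegral.integral_const_mul, intervalIntegral.integral_sub (i1.add i2) i3,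
      intervalIntegral.integral_add i1 i2]
  rw [split]
  have J1 : (∫ s in (0 : ℝ)..ti, (ti - s) ^ p) = ti ^ q / q := by
    rw [intervalIntegral.integral_comp_sub_left (fun x : ℝ => x ^ p) ti,
      integral_rpow (Or.inl (by linarith : (-1:ℝ) < p)), hp1, sub_self, sub_zero,
      Real.zero_rpow hq.ne', sub_zero]
  have J2 : (∫ s in (0 : ℝ)..ti, (tj - s) ^ p) = (tj ^ q - (tj - ti) ^ q) / q := by
    rw [intervalIntegral.integral_comp_sub_left (fun x : ℝ => x ^ p) tj,
      integral_rpow (Or.inl (by linarith : (-1:ℝ) < p)), hp1, sub_zero]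
  have J3 : (∫ s in (0 : ℝ)..ti, (ti + tj - 2 * s) ^ p)
      = 2⁻¹ * (((ti + tj) ^ q - (tj - ti) ^ q) / q) := by
    have h2 : (2:ℝ) ≠ 0 := two_ne_zero
    have := intervalIntegral.integral_comp_mul_left (a := 0) (b := ti)
      (fun x : ℝ => (ti + tj - x) ^ p) h2
    simp only [mul_zero, smul_eq_mul] at this
    rw [show (fun s : ℝ => (ti + tj - 2 * s) ^ p) = fun s : ℝ => (ti + tj - 2 * s) ^ p from rfl]
    calc (∫ s in (0 : ℝ)..ti, (ti + tj - 2 * s) ^ p)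
        = 2⁻¹ * ∫ x in (0 : ℝ)..(2 * ti), (ti + tj - x) ^ p := this
      _ = 2⁻¹ * (((ti + tj) ^ q - (tj - ti) ^ q) / q) := by
          rw [intervalIntegral.integral_comp_sub_left (fun x : ℝ => x ^ p) (ti + tj),
            integral_rpow (Or.inl (by linarith : (-1:ℝ) < p)), hp1]
          ring_nf
  rw [J1, J2, J3]
  have hαne : α ≠ 0 := hα0.ne'
  have h1 : α - 1 ≠ 0 := by intro h; apply absurd hα1; linarith [sub_eq_zero.mp h]
  have h2 : 2 * α - 1 ≠ 0 := by intro h; nlinarith [sub_eq_zero.mp h]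
  have hpq : p = (α - 1) / α := by rw [hp_def]; field_simp
  have hqq : q = (2 * α - 1) / α := by rw [hq_def]; field_simp
  rw [hpq, hqq]
  field_simp
  ring
end
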